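/- arXiv:0807.0540 — 2 statements merged into one kernel-verified Lean document; each statement's English description precedes it below -/
import Mathlib

section
/- Over any field K, for A ∈ X·K[[X]] the shuffle exponential E = exp⧢(A) satisfies the differential equation τ(E) = E ⧢ τ(A), where τ is the coefficient shift operator. -/
open PowerSeries

/-- The shuffle product of formal power series. -/
noncomputable def shuffle {K : Type*} [Field K] (A B : PowerSeries K) : PowerSeries K :=
  PowerSeries.mk fun n => ∑ k ∈ Finset.range (n + 1),
    (n.choose k : K) * (coeff k A) * (coeff (n - k) B)

/-- The shift operator `τ(Σ αₙXⁿ) = Σ α_{n+1}Xⁿ`. -/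
noncomputable def shift {K : Type*} [Field K] (A : PowerSeries K) : PowerSeries K :=
  PowerSeries.mk fun n => coeff (n + 1) A

/-- The shuffle exponential `exp⧢(A) = Σ_{k≥0} A^{⧢k}/k!` of a series without constant
term, well-defined over any field: by the exponential formula its `n`-th coefficient is
the integer polynomial `Σ_π ∏_{b ∈ π} α_{|b|}` in the coefficients of `A`, where `π`
runs over the set partitions of an `n`-element set. -/
noncomputable def expSh {K : Type*} [Field K] (A : PowerSeries K) : PowerSeries K :=
  PowerSeries.mk fun n =>
    ∑ π : Finpartition (Finset.univ : Finset (Fin n)), ∏ b ∈ π.parts, coeff b.card A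

section ShuffleAux

open Finset

variable {K : Type*} [CommRing K] {α : Type*} [DecidableEq α]

noncomputable def gAux (f : ℕ → K) : ℕ → K
  | 0 => 1
  | (n+1) => ∑ k ∈ Finset.range (n+1), (n.choose k : K) * f (k+1) * gAux f (n-k)
  decreasing_by omega

lemma avoid_parts_of_mem {s : Finset α} (π : Finpartition s) {b : Finset α} (hb : b ∈ π.parts) :
    (π.avoid b).parts = π.parts.erase b := by
  ext c
  rw [Finpartition.mem_avoid, mem_erase]
  constructor
  · rintro ⟨d, hd, hdb, rfl⟩
    have hne : d ≠ b := fun h => hdb (h ▸ le_refl _)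
    have : Disjoint d b := π.disjoint hd hb hne
    rw [sdiff_eq_left.mpr this]
    exact ⟨hne, hd⟩
  · rintro ⟨hne, hc⟩
    have hdisj : Disjoint c b := π.disjoint hc hb hne
    refine ⟨c, hc, ?_, sdiff_eq_left.mpr hdisj⟩
    intro hle
    exact (π.nonempty_of_mem_parts hc).ne_empty (hdisj.eq_bot_of_le hle)

lemma finpartition_heq {s t : Finset α} (h : s = t) {P : Finpartition s} {Q : Finpartition t}
    (hp : P.parts = Q.parts) : HEq P Q := by
  subst h; exact heq_of_eq (Finpartition.ext hp)

lemma key (f : ℕ → K) {s : Finset α} {a : α} (ha : a ∈ s) :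
    (∑ π : Finpartition s, ∏ b ∈ π.parts, f b.card)
    = ∑ T ∈ (s.erase a).powerset,
        f (T.card + 1) * ∑ σ : Finpartition ((s.erase a) \ T), ∏ b ∈ σ.parts, f b.card := by
  simp_rw [mul_sum]
  rw [Finset.sum_sigma']
  -- facts
  have hset : ∀ π : Finpartition s, s \ π.part a = (s.erase a) \ ((π.part a).erase a) := by
    intro π
    have hapa : a ∈ π.part a := π.mem_part ha
    ext x
    simp only [mem_sdiff, mem_erase]
    constructor
    · rintro ⟨hx, hxp⟩
      exact ⟨⟨fun h => hxp (h ▸ hapa), hx⟩, fun h => hxp h.2⟩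
    · rintro ⟨⟨hxa, hx⟩, hxp⟩
      exact ⟨hx, fun h => hxp ⟨hxa, h⟩⟩
  have hTsub : ∀ {T : Finset α}, T ∈ (s.erase a).powerset → a ∉ T := by
    intro T hT h
    exact (notMem_erase a s) (mem_powerset.mp hT h)
  have hb : ∀ (T : Finset α), (insert a T : Finset α) ≠ ⊥ := by
    intro T h
    simpa [bot_eq_empty] using h
  have hab : ∀ {T : Finset α}, T ∈ (s.erase a).powerset →
      Disjoint ((s.erase a) \ T) (insert a T) := by
    intro T _
    rw [Finset.disjoint_left]
    intro x hx hx'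
    rcases mem_insert.mp hx' with rfl | h
    · exact (notMem_erase x s) (mem_sdiff.mp hx).1
    · exact (mem_sdiff.mp hx).2 h
  have hc : ∀ {T : Finset α}, T ∈ (s.erase a).powerset →
      ((s.erase a) \ T) ⊔ insert a T = s := by
    intro T hT
    have hTs : T ⊆ s.erase a := mem_powerset.mp hT
    rw [sup_eq_union]
    ext x
    simp only [mem_union, mem_sdiff, mem_erase, mem_insert]
    constructor
    · rintro (⟨⟨_, hx⟩, _⟩ | (rfl | h))
      · exact hx
      · exact ha
      · exact (mem_erase.mp (hTs h)).2
    · intro hx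
      by_cases hxa : x = a
      · exact Or.inr (Or.inl hxa)
      · by_cases hxT : x ∈ T
        · exact Or.inr (Or.inr hxT)
        · exact Or.inl ⟨⟨hxa, hx⟩, hxT⟩
  refine Finset.sum_bij'
    (fun π _ => ⟨(π.part a).erase a, ((π.avoid (π.part a)).copy (hset π))⟩)
    (fun p hp => (p.2.extend (hb p.1) (hab (mem_sigma.mp hp).1) (hc (mem_sigma.mp hp).1))
      : ∀ p ∈ ((s.erase a).powerset).sigma
        (fun T => (Finset.univ : Finset (Finpartition ((s.erase a) \ T)))), Finpartition s)
    ?_ ?_ ?_ ?_ ?_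
  · intro π _
    rw [mem_sigma]
    refine ⟨mem_powerset.mpr ?_, mem_univ _⟩
    exact erase_subset_erase a (π.le (π.part_mem.2 ha))
  · intro p hp
    exact mem_univ _
  · -- left inverse
    intro π _
    have hapa : a ∈ π.part a := π.mem_part ha
    apply Finpartition.ext
    simp only [Finpartition.extend_parts, Finpartition.copy_parts]
    rw [avoid_parts_of_mem π (π.part_mem.2 ha), insert_erase hapa,
      insert_erase (π.part_mem.2 ha)]
  · -- right inverse
    rintro ⟨T, σ⟩ hp
    have hT := (mem_sigma.mp hp).1
    have haT : a ∉ T := hTsub hT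
    have hnotin : insert a T ∉ σ.parts := by
      intro h
      have := σ.le h (mem_insert_self a T)
      exact (notMem_erase a s) (mem_sdiff.mp this).1
    have hmem : ∀ (h1 : (insert a T : Finset α) ≠ ⊥) (h2 : Disjoint (s.erase a \ T) (insert a T))
        (h3 : (s.erase a \ T) ⊔ insert a T = s), insert a T ∈ (σ.extend h1 h2 h3).parts := by
      intro h1 h2 h3; simp [Finpartition.extend_parts]
    have hpart : ∀ (h1 : (insert a T : Finset α) ≠ ⊥) (h2 : Disjoint (s.erase a \ T) (insert a T))
        (h3 : (s.erase a \ T) ⊔ insert a T = s), (σ.extend h1 h2 h3).part a = insert a T := by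
      intro h1 h2 h3
      exact Finpartition.part_eq_of_mem _ (hmem _ _ _) (mem_insert_self a T)
    refine Sigma.ext ?_ ?_
    · dsimp only; rw [hpart, erase_insert haT]
    · dsimp only
      refine finpartition_heq (by rw [hpart, erase_insert haT]) ?_
      simp only [Finpartition.copy_parts]
      rw [avoid_parts_of_mem _ ((Finpartition.part_mem _).2 ha), hpart]
      simp only [Finpartition.extend_parts]
      exact erase_insert hnotin
  · -- values
    intro π _
    have hpa := π.part_mem.2 ha
    have hapa : a ∈ π.part a := π.mem_part ha
    have hone : 1 ≤ (π.part a).card := card_pos.mpr ⟨a, hapa⟩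
    dsimp only
    simp only [Finpartition.copy_parts, card_erase_of_mem hapa, Nat.sub_add_cancel hone]
    rw [← Finset.mul_prod_erase _ _ hpa, avoid_parts_of_mem π hpa]

lemma Psum_eq (f : ℕ → K) : ∀ (n : ℕ) (s : Finset α), s.card = n →
    (∑ π : Finpartition s, ∏ b ∈ π.parts, f b.card) = gAux f n := by
  intro n
  induction n using Nat.strong_induction_on with
  | _ n ih =>
    intro s hs
    match n, hs with
    | 0, hs =>
      have hse : s = ∅ := card_eq_zero.mp hs
      subst hse
      have hparts : ∀ π : Finpartition (∅ : Finset α), π.parts = ∅ := by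
        intro π
        rw [eq_empty_iff_forall_notMem]
        intro b hbmem
        have h1 := π.le hbmem
        have := (π.nonempty_of_mem_parts hbmem).ne_empty
        simp only [le_eq_subset, subset_empty] at h1
        exact this h1
      have hcard : (Finset.univ : Finset (Finpartition (∅ : Finset α))).card = 1 := by
        have : Unique (Finpartition (∅ : Finset α)) := by
          rw [← bot_eq_empty]; infer_instance
        simp [Fintype.card_unique]
      rw [Finset.sum_congr rfl (fun π _ => by rw [hparts π, prod_empty])]
      rw [sum_const, hcard, one_smul, gAux]
    | (m+1), hs =>
      obtain ⟨a, ha⟩ : s.Nonempty := card_pos.mp (hs ▸ m.succ_pos)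
      have hcardera : (s.erase a).card = m := by
        rw [card_erase_of_mem ha, hs]; rfl
      rw [key f ha, sum_powerset, gAux]
      rw [hcardera]
      refine Finset.sum_congr rfl ?_
      intro j hj
      have hjm : j ≤ m := Nat.lt_succ_iff.mp (mem_range.mp hj)
      have : ∀ T ∈ powersetCard j (s.erase a),
          f (T.card + 1) * ∑ σ : Finpartition ((s.erase a) \ T), ∏ b ∈ σ.parts, f b.card
          = f (j+1) * gAux f (m - j) := by
        intro T hT
        obtain ⟨hTs, hTc⟩ := mem_powersetCard.mp hT
        rw [hTc, ih (m - j) (by omega) _ (by rw [card_sdiff_of_subset hTs, hcardera, hTc])]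
      rw [Finset.sum_congr rfl this, sum_const, card_powersetCard, hcardera, nsmul_eq_mul]
      ring

end ShuffleAux

section

open Finset

/-- Over any field, `E = exp⧢(A)` satisfies `τ(E) = E ⧢ τ(A)` for `A ∈ X·K[[X]]`. -/
theorem shift_expSh {K : Type*} [Field K] (A : PowerSeries K)
    (hA : constantCoeff A = 0) :
    shift (expSh A) = shuffle (expSh A) (shift A) := by
  ext n
  set f : ℕ → K := fun m => coeff m A with hf
  have hE : ∀ k : ℕ,
      (∑ π : Finpartition (Finset.univ : Finset (Fin k)), ∏ b ∈ π.parts, coeff b.card A)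
      = gAux f k := fun k => Psum_eq f k _ (by simp)
  simp only [shift, shuffle, expSh, coeff_mk, hE]
  rw [gAux]
  rw [← Finset.sum_range_reflect]
  refine Finset.sum_congr rfl ?_
  intro k hk
  have hkn : k ≤ n := Nat.lt_succ_iff.mp (Finset.mem_range.mp hk)
  have h1 : n + 1 - 1 - k = n - k := by omega
  have h2 : n - (n - k) = k := by omega
  rw [h1, h2, Nat.choose_symm hkn]
  show (n.choose k : K) * f (n - k + 1) * gAux f k = _
  ring

end
end

section
/- Let A, B be rational formal power series in K[[X]] over a field K. Then their shuffle product A ⧢ B is rational, and moreover ‖A ⧢ B‖ ≤ ‖A‖·‖B‖, where ‖C‖ denotes the dimension of the K-span of {τⁿ(C) : n ≥ 0}. -/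
open PowerSeries

/-- `A` is rational: `A = f/g` for polynomials `f, g` with `g(0) ≠ 0`. -/
def IsRationalPS {K : Type*} [Field K] (A : PowerSeries K) : Prop :=
  ∃ f g : Polynomial K, g.coeff 0 ≠ 0 ∧ A * (g : PowerSeries K) = (f : PowerSeries K)

/-- `‖A‖`: the dimension of the `K`-span of the shifts `τⁿ(A)`, `n ≥ 0`. -/
noncomputable def psNorm {K : Type*} [Field K] (A : PowerSeries K) : ℕ :=
  Module.finrank K ↥(Submodule.span K (Set.range fun n => shift^[n] A))

namespace ShuffleAux
variable {K : Type*} [Field K]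

lemma coeff_shuffle (A B : PowerSeries K) (n : ℕ) :
    coeff n (shuffle A B) = ∑ k ∈ Finset.range (n + 1),
      (n.choose k : K) * (coeff k A) * (coeff (n - k) B) := coeff_mk _ _

lemma coeff_shift (A : PowerSeries K) (n : ℕ) :
    coeff n (shift A) = coeff (n + 1) A := coeff_mk _ _

lemma coeff_shift_iter (i : ℕ) (A : PowerSeries K) (n : ℕ) :
    coeff n (shift^[i] A) = coeff (n + i) A := by
  induction i generalizing n with
  | zero => simp
  | succ i ih => rw [Function.iterate_succ_apply', coeff_shift, ih]; ring_nf

/-- The shift operator as a linear map. -/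
noncomputable def shiftL : PowerSeries K →ₗ[K] PowerSeries K where
  toFun := shift
  map_add' A B := by ext n; simp [coeff_shift]
  map_smul' a A := by ext n; simp [coeff_shift]

/-- The shuffle product as a bilinear map. -/
noncomputable def shuffleL : PowerSeries K →ₗ[K] PowerSeries K →ₗ[K] PowerSeries K :=
  LinearMap.mk₂ K shuffle
    (fun A A' B => by
      ext n; simp only [coeff_shuffle, map_add, ← Finset.sum_add_distrib]
      exact Finset.sum_congr rfl fun k _ => by ring)
    (fun c A B => by
      ext n; simp [coeff_shuffle, Finset.mul_sum]; exact Finset.sum_congr rfl fun k _ => by ring)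
    (fun A B B' => by
      ext n; simp only [coeff_shuffle, map_add, ← Finset.sum_add_distrib]
      exact Finset.sum_congr rfl fun k _ => by ring)
    (fun c A B => by
      ext n; simp [coeff_shuffle, Finset.mul_sum]; exact Finset.sum_congr rfl fun k _ => by ring)

@[simp] lemma shuffleL_apply (A B : PowerSeries K) : shuffleL A B = shuffle A B := rfl

/-- Leibniz rule for the shift of a shuffle product. -/
lemma shift_shuffle (A B : PowerSeries K) :
    shift (shuffle A B) = shuffle (shift A) B + shuffle A (shift B) := by
  ext n
  simp only [map_add, coeff_shift, coeff_shuffle]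
  rw [Finset.sum_range_succ'
    (fun k => ((n+1).choose k : K) * coeff k A * coeff (n+1-k) B) (n+1)]
  have h1 : ∀ k ∈ Finset.range (n+1),
      (((n+1).choose (k+1) : K)) * coeff (k+1) A * coeff (n+1-(k+1)) B
        = ((n.choose k : K) * coeff (k+1) A * coeff (n-k) B)
          + ((n.choose (k+1) : K) * coeff (k+1) A * coeff (n-k) B) := by
    intro k _
    rw [Nat.choose_succ_succ, Nat.succ_sub_succ]
    push_cast
    ring
  rw [Finset.sum_congr rfl h1, Finset.sum_add_distrib]
  have h2 : ∑ k ∈ Finset.range (n+1), (n.choose (k+1) : K) * coeff (k+1) A * coeff (n-k) B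
      = ∑ k ∈ Finset.range n, (n.choose (k+1) : K) * coeff (k+1) A * coeff (n-k) B := by
    rw [Finset.sum_range_succ]
    simp [Nat.choose_succ_self]
  have h3 : ∑ k ∈ Finset.range (n+1), (n.choose k : K) * coeff k A * coeff (n-k+1) B
      = (∑ k ∈ Finset.range n, (n.choose (k+1) : K) * coeff (k+1) A * coeff (n-k) B)
        + coeff 0 A * coeff (n+1) B := by
    rw [Finset.sum_range_succ'
      (fun k => (n.choose k : K) * coeff k A * coeff (n-k+1) B) n]
    simp only [Nat.choose_zero_right, Nat.cast_one, one_mul, Nat.sub_zero]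
    congr 1
    refine Finset.sum_congr rfl fun k hk => ?_
    have hk' : k < n := Finset.mem_range.mp hk
    have : n - (k+1) + 1 = n - k := by omega
    rw [this]
  rw [h2, h3]
  simp only [Nat.choose_zero_right, Nat.cast_one, one_mul, Nat.sub_zero]
  ring

lemma X_pow_mul_shift_iter (i : ℕ) (A : PowerSeries K) :
    (X : PowerSeries K) ^ i * shift^[i] A = A - ((trunc i A : Polynomial K) : PowerSeries K) := by
  ext n
  rw [coeff_X_pow_mul', map_sub, Polynomial.coeff_coe, coeff_trunc]
  by_cases h : i ≤ n
  · rw [if_pos h, if_neg (by omega), coeff_shift_iter, Nat.sub_add_cancel h, sub_zero]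
  · rw [if_neg h, if_pos (by omega), sub_self]

/-- A power series whose shifts span a finite-dimensional space is rational. -/
lemma rational_of_fd (A : PowerSeries K)
    (h : FiniteDimensional K (Submodule.span K (Set.range fun n => shift^[n] A))) :
    IsRationalPS A := by
  classical
  set U := Submodule.span K (Set.range fun n => shift^[n] A) with hU
  set d := Module.finrank K U with hd
  have hv : ∀ i : Fin (d + 1), shift^[(i : ℕ)] A ∈ U :=
    fun i => Submodule.subset_span ⟨(i : ℕ), rfl⟩
  have hnli : ¬ LinearIndependent K (fun i : Fin (d + 1) => (⟨shift^[(i : ℕ)] A, hv i⟩ : U)) := by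
    intro hli
    have := hli.fintype_card_le_finrank
    simp [← hd] at this
  obtain ⟨c, hsum, i0, hi0⟩ := Fintype.not_linearIndependent_iff.mp hnli
  have hsum' : ∑ i : Fin (d + 1), c i • shift^[(i : ℕ)] A = 0 := by
    have h2 := congrArg (Subtype.val) hsum
    push_cast at h2
    simpa using h2
  set s : Finset (Fin (d + 1)) := Finset.univ.filter (fun i => c i ≠ 0) with hs
  have hsne : s.Nonempty := ⟨i0, by simp [hs, hi0]⟩
  set M := s.max' hsne with hM
  have hcM : c M ≠ 0 := by
    have hmem : M ∈ s := s.max'_mem hsne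
    exact (Finset.mem_filter.mp hmem).2
  have hle : ∀ i, c i ≠ 0 → i ≤ M := fun i hi => s.le_max' i (by simp [hs, hi])
  refine ⟨∑ i : Fin (d + 1), Polynomial.C (c i) * Polynomial.X ^ ((M : ℕ) - (i : ℕ)) *
      trunc (i : ℕ) A,
    ∑ i : Fin (d + 1), Polynomial.C (c i) * Polynomial.X ^ ((M : ℕ) - (i : ℕ)), ?_, ?_⟩
  · rw [Polynomial.finset_sum_coeff]
    rw [Finset.sum_eq_single M]
    · simpa using hcM
    · intro i _ hiM
      by_cases hci : c i = 0
      · simp [hci]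
      · have hile : (i : ℕ) ≤ (M : ℕ) := hle i hci
        have h1 : (i : ℕ) < (M : ℕ) :=
          lt_of_le_of_ne hile fun hh => hiM (Fin.val_injective hh)
        rw [Polynomial.coeff_C_mul, Polynomial.coeff_X_pow, if_neg (by omega), mul_zero]
    · simp
  · have hgcoe : ((∑ i : Fin (d+1), Polynomial.C (c i) * Polynomial.X ^ ((M:ℕ)-(i:ℕ)) :
        Polynomial K) : PowerSeries K)
        = ∑ i : Fin (d+1), PowerSeries.C (c i) * (X : PowerSeries K) ^ ((M:ℕ)-(i:ℕ)) := by
      rw [← Polynomial.coeToPowerSeries.ringHom_apply, map_sum]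
      refine Finset.sum_congr rfl fun i _ => ?_
      simp [Polynomial.coeToPowerSeries.ringHom_apply]
    have hfcoe : ((∑ i : Fin (d+1), Polynomial.C (c i) * Polynomial.X ^ ((M:ℕ)-(i:ℕ)) *
        trunc (i:ℕ) A : Polynomial K) : PowerSeries K)
        = ∑ i : Fin (d+1), PowerSeries.C (c i) * (X : PowerSeries K) ^ ((M:ℕ)-(i:ℕ)) *
          ((trunc (i:ℕ) A : Polynomial K) : PowerSeries K) := by
      rw [← Polynomial.coeToPowerSeries.ringHom_apply, map_sum]
      refine Finset.sum_congr rfl fun i _ => ?_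
      simp [Polynomial.coeToPowerSeries.ringHom_apply]
    rw [hgcoe, hfcoe, Finset.mul_sum, ← sub_eq_zero, ← Finset.sum_sub_distrib]
    have step1 : ∀ i ∈ (Finset.univ : Finset (Fin (d+1))),
        (A * (PowerSeries.C (c i) * X ^ ((M:ℕ)-(i:ℕ))) -
          PowerSeries.C (c i) * X ^ ((M:ℕ)-(i:ℕ)) *
            ((trunc (i:ℕ) A : Polynomial K) : PowerSeries K))
        = PowerSeries.C (c i) * ((X : PowerSeries K) ^ (M:ℕ) * shift^[(i:ℕ)] A) := by
      intro i _
      by_cases hci : c i = 0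
      · simp [hci]
      · have hiM : (i:ℕ) ≤ (M:ℕ) := hle i hci
        have e1 : A * (PowerSeries.C (c i) * X ^ ((M:ℕ)-(i:ℕ))) -
            PowerSeries.C (c i) * X ^ ((M:ℕ)-(i:ℕ)) *
              ((trunc (i:ℕ) A : Polynomial K) : PowerSeries K)
            = PowerSeries.C (c i) * ((X : PowerSeries K) ^ ((M:ℕ)-(i:ℕ)) *
              (A - ((trunc (i:ℕ) A : Polynomial K) : PowerSeries K))) := by ring
        rw [e1, ← X_pow_mul_shift_iter, ← mul_assoc ((X : PowerSeries K) ^ ((M:ℕ)-(i:ℕ))),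
          ← pow_add, Nat.sub_add_cancel hiM]
    rw [Finset.sum_congr rfl step1]
    have step2 : ∑ i : Fin (d+1), PowerSeries.C (c i) *
        ((X : PowerSeries K) ^ (M:ℕ) * shift^[(i:ℕ)] A)
        = (X : PowerSeries K) ^ (M:ℕ) * ∑ i : Fin (d+1), c i • shift^[(i:ℕ)] A := by
      rw [Finset.mul_sum]
      refine Finset.sum_congr rfl fun i _ => ?_
      rw [smul_eq_C_mul]
      ring
    rw [step2, hsum', mul_zero]

/-- The shifts of a rational power series span a finite-dimensional space. -/
lemma fd_of_rational (A : PowerSeries K) (hA : IsRationalPS A) :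
    FiniteDimensional K (Submodule.span K (Set.range fun n => shift^[n] A)) := by
  classical
  obtain ⟨f, g, hg0, hfg⟩ := hA
  set N := max (f.natDegree + 1) g.natDegree with hN
  have hNf : f.natDegree < N := lt_of_lt_of_le (Nat.lt_succ_self _) (le_max_left _ _)
  have hNg : g.natDegree ≤ N := le_max_right _ _
  have key : ∑ j ∈ Finset.range (N+1), g.coeff j • shift^[N-j] A = 0 := by
    ext n
    rw [map_sum, map_zero]
    have e1 : ∀ j ∈ Finset.range (N+1), coeff n (g.coeff j • shift^[N-j] A)
        = g.coeff j * coeff (N + n - j) A := by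
      intro j hj
      have hj' : j ≤ N := by
        have := Finset.mem_range.mp hj; omega
      have harg : n + (N - j) = N + n - j := by omega
      rw [map_smul, smul_eq_mul, coeff_shift_iter, harg]
    rw [Finset.sum_congr rfl e1]
    have e2 : ∑ j ∈ Finset.range (N+n+1), g.coeff j * coeff (N+n-j) A
        = ∑ j ∈ Finset.range (N+1), g.coeff j * coeff (N+n-j) A := by
      refine (Finset.sum_subset ?_ ?_).symm
      · intro x hx
        simp only [Finset.mem_range] at hx ⊢
        omega
      · intro x hx hx'
        simp only [Finset.mem_range] at hx hx'
        rw [Polynomial.coeff_eq_zero_of_natDegree_lt (by omega), zero_mul]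
    rw [← e2]
    have e3 : ∑ j ∈ Finset.range (N+n+1), g.coeff j * coeff (N+n-j) A
        = coeff (N+n) ((g : PowerSeries K) * A) := by
      rw [coeff_mul, Finset.Nat.sum_antidiagonal_eq_sum_range_succ_mk]
      refine Finset.sum_congr rfl fun j _ => ?_
      rw [Polynomial.coeff_coe]
    rw [e3, mul_comm, hfg, Polynomial.coeff_coe,
      Polynomial.coeff_eq_zero_of_natDegree_lt (by omega)]
  set gens : Set (PowerSeries K) := (fun i => shift^[i] A) '' Set.Iio N with hgens
  set W := Submodule.span K gens with hW
  have hmemW : ∀ i < N, shift^[i] A ∈ W := fun i hi => Submodule.subset_span ⟨i, hi, rfl⟩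
  have hTop : shift^[N] A ∈ W := by
    have hpeel := Finset.sum_range_succ' (fun j => g.coeff j • shift^[N-j] A) N
    rw [key] at hpeel
    have h0 : g.coeff 0 • shift^[N-0] A
        = -∑ j ∈ Finset.range N, g.coeff (j+1) • shift^[N-(j+1)] A :=
      eq_neg_of_add_eq_zero_right hpeel.symm
    have h1 : shift^[N] A = (g.coeff 0)⁻¹ • (g.coeff 0 • shift^[N-0] A) := by
      rw [smul_smul, inv_mul_cancel₀ hg0, one_smul, Nat.sub_zero]
    rw [h1, h0]
    exact Submodule.smul_mem _ _ (Submodule.neg_mem _ (Submodule.sum_mem _ fun j hj =>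
      Submodule.smul_mem _ _ (hmemW _ (by have := Finset.mem_range.mp hj; omega))))
  have hmap : W.map shiftL ≤ W := by
    rw [hW, Submodule.map_span, Submodule.span_le]
    rintro y ⟨z, ⟨i, hi, rfl⟩, rfl⟩
    have hz : shiftL (shift^[i] A) = shift^[i+1] A := by
      rw [Function.iterate_succ_apply']; rfl
    rw [SetLike.mem_coe, hz]
    have hi' : i < N := hi
    rcases eq_or_lt_of_le (Nat.succ_le_of_lt hi') with h | h
    · have h' : i + 1 = N := h
      rw [h']; exact hTop
    · exact hmemW _ h
  have hall : ∀ n, shift^[n] A ∈ W := by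
    intro n
    induction n with
    | zero => exact hmemW 0 (by omega)
    | succ n ih =>
      rw [Function.iterate_succ_apply']
      exact hmap (Submodule.mem_map_of_mem ih)
  have hle : Submodule.span K (Set.range fun n => shift^[n] A) ≤ W := by
    rw [Submodule.span_le]; rintro x ⟨n, rfl⟩; exact hall n
  have : FiniteDimensional K W :=
    FiniteDimensional.span_of_finite K ((Set.finite_Iio N).image _)
  exact Submodule.finiteDimensional_of_le hle

/-- Every shift of a shuffle product lies in the span of shuffles of shifts. -/
lemma shift_iter_shuffle_mem (A B : PowerSeries K) (n : ℕ) :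
    shift^[n] (shuffle A B) ∈ Submodule.span K
      {x : PowerSeries K | ∃ i j, x = shuffle (shift^[i] A) (shift^[j] B)} := by
  set S := {x : PowerSeries K | ∃ i j, x = shuffle (shift^[i] A) (shift^[j] B)} with hS
  induction n with
  | zero => exact Submodule.subset_span ⟨0, 0, rfl⟩
  | succ n ih =>
    rw [Function.iterate_succ_apply']
    have hmap : (Submodule.span K S).map shiftL ≤ Submodule.span K S := by
      rw [Submodule.map_span, Submodule.span_le]
      rintro y ⟨z, ⟨i, j, rfl⟩, rfl⟩
      have hz : shiftL (shuffle (shift^[i] A) (shift^[j] B))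
          = shuffle (shift^[i+1] A) (shift^[j] B) + shuffle (shift^[i] A) (shift^[j+1] B) := by
        have hrfl : shiftL (shuffle (shift^[i] A) (shift^[j] B))
            = shift (shuffle (shift^[i] A) (shift^[j] B)) := rfl
        rw [hrfl, shift_shuffle, Function.iterate_succ_apply' shift i,
          Function.iterate_succ_apply' shift j]
      rw [SetLike.mem_coe, hz]
      exact Submodule.add_mem _ (Submodule.subset_span ⟨i+1, j, rfl⟩)
        (Submodule.subset_span ⟨i, j+1, rfl⟩)
    exact hmap (Submodule.mem_map_of_mem ih)

/-- For finite-dimensional submodules `U`, `V`, there is a finite-dimensional submodule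
containing all shuffles, of dimension at most `dim U * dim V`. -/
lemma exists_target (U V : Submodule K (PowerSeries K))
    [FiniteDimensional K U] [FiniteDimensional K V] :
    ∃ T : Submodule K (PowerSeries K), FiniteDimensional K T ∧
      Module.finrank K T ≤ Module.finrank K U * Module.finrank K V ∧
      ∀ x ∈ U, ∀ y ∈ V, shuffle x y ∈ T := by
  classical
  let bu := Module.finBasis K ↥U
  let bv := Module.finBasis K ↥V
  let f : Fin (Module.finrank K ↥U) × Fin (Module.finrank K ↥V) → PowerSeries K :=
    fun p => shuffle (bu p.1 : PowerSeries K) (bv p.2 : PowerSeries K)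
  refine ⟨Submodule.span K (Set.range f),
    FiniteDimensional.span_of_finite K (Set.finite_range f), ?_, ?_⟩
  · calc Module.finrank K (Submodule.span K (Set.range f)) ≤ (Set.range f).toFinset.card :=
        finrank_span_le_card _
      _ ≤ Fintype.card (Fin (Module.finrank K ↥U) × Fin (Module.finrank K ↥V)) := by
        rw [Set.toFinset_range]
        exact Finset.card_image_le.trans (by simp)
      _ = Module.finrank K ↥U * Module.finrank K ↥V := by simp
  · intro x hx y hy
    have hxe : x = ∑ i, bu.repr ⟨x, hx⟩ i • (bu i : PowerSeries K) := by
      have h2 := congrArg (Subtype.val) (bu.sum_repr ⟨x, hx⟩)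
      push_cast at h2
      exact h2.symm
    have hye : y = ∑ j, bv.repr ⟨y, hy⟩ j • (bv j : PowerSeries K) := by
      have h2 := congrArg (Subtype.val) (bv.sum_repr ⟨y, hy⟩)
      push_cast at h2
      exact h2.symm
    have hexp : shuffle x y = ∑ i, ∑ j,
        (bu.repr ⟨x, hx⟩ i * bv.repr ⟨y, hy⟩ j) • f (i, j) := by
      conv_lhs => rw [← shuffleL_apply, hxe, hye]
      simp only [map_sum, map_smul, LinearMap.sum_apply, LinearMap.smul_apply,
        Finset.smul_sum, smul_smul, shuffleL_apply, f]
      rw [Finset.sum_comm]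
      exact Finset.sum_congr rfl fun i _ => Finset.sum_congr rfl fun j _ => by rw [mul_comm]
    rw [hexp]
    exact Submodule.sum_mem _ fun i _ => Submodule.sum_mem _ fun j _ =>
      Submodule.smul_mem _ _ (Submodule.subset_span ⟨(i, j), rfl⟩)

end ShuffleAux

open ShuffleAux in
/-- The shuffle product of two rational power series is rational, and
`‖A ⧢ B‖ ≤ ‖A‖·‖B‖`. -/
theorem shuffle_rational {K : Type*} [Field K] (A B : PowerSeries K)
    (hA : IsRationalPS A) (hB : IsRationalPS B) :
    IsRationalPS (shuffle A B) ∧ psNorm (shuffle A B) ≤ psNorm A * psNorm B := by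
  classical
  haveI hUA : FiniteDimensional K (Submodule.span K (Set.range fun n => shift^[n] A)) :=
    fd_of_rational A hA
  haveI hUB : FiniteDimensional K (Submodule.span K (Set.range fun n => shift^[n] B)) :=
    fd_of_rational B hB
  obtain ⟨T, hTfd, hTrank, hTmem⟩ := exists_target
    (Submodule.span K (Set.range fun n => shift^[n] A))
    (Submodule.span K (Set.range fun n => shift^[n] B))
  have hSle : Submodule.span K
      {x : PowerSeries K | ∃ i j, x = shuffle (shift^[i] A) (shift^[j] B)} ≤ T := by
    rw [Submodule.span_le]
    rintro x ⟨i, j, rfl⟩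
    exact hTmem _ (Submodule.subset_span ⟨i, rfl⟩) _ (Submodule.subset_span ⟨j, rfl⟩)
  have hle : Submodule.span K (Set.range fun n => shift^[n] (shuffle A B)) ≤ T := by
    rw [Submodule.span_le]
    rintro x ⟨n, rfl⟩
    exact hSle (shift_iter_shuffle_mem A B n)
  haveI := hTfd
  constructor
  · exact rational_of_fd _ (Submodule.finiteDimensional_of_le hle)
  · exact le_trans (Submodule.finrank_mono hle) hTrank
end
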